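/- The Burau representation of the braid group B_n is q-unitary: for every β ∈ B_n and all v, w ∈ ℂ(q)^{n−1}, one has ⟨ρ_n(β)(v), ρ_n(β)(w)⟩ = ⟨v, w⟩, where ⟨·,·⟩ is the sesquilinear q-form described in the context. -/

import Mathlib

set_option synthInstance.maxHeartbeats 400000

/-- The alternating word `i j i j ⋯` with `m` factors, as an element of the free group. -/
def altWord {α : Type*} (i j : α) : ℕ → FreeGroup α
  | 0 => 1
  | m + 1 => FreeGroup.of i * altWord j i m

/-- The braid relations associated to a Coxeter matrix. -/
def artinRels {B : Type*} (M : CoxeterMatrix B) : Set (FreeGroup B) :=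
  {r | ∃ i j : B, M i j ≠ 0 ∧ r = altWord i j (M i j) * (altWord j i (M i j))⁻¹}

/-- The Artin–Tits group of a Coxeter matrix. -/
abbrev ArtinTitsGroup {B : Type*} (M : CoxeterMatrix B) := PresentedGroup (artinRels M)

/-- The standard generators of the Artin–Tits group. -/
def artinσ {B : Type*} (M : CoxeterMatrix B) (i : B) : ArtinTitsGroup M := PresentedGroup.of i

/-- The braid group on `n` strands, presented with generators `σ_1, …, σ_{n-1}`
(indexed by `Fin (n-1)`) and the braid relations. -/
abbrev BraidGroup (n : ℕ) := ArtinTitsGroup (CoxeterMatrix.Aₙ (n - 1))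

/-- The standard generator `σ_{i+1}` of the braid group `B_n`, for `i : Fin (n-1)`. -/
def braidσ (n : ℕ) (i : Fin (n - 1)) : BraidGroup n := artinσ _ i

/-- The matrix of the reduced Burau action of the generator `σ_{i+1}` on `ℂ(q)^{n-1}`:
on the standard basis, `αᵢ ↦ -q² αᵢ`, `αⱼ ↦ αⱼ + q αᵢ` if `|i-j| = 1`, and `αⱼ ↦ αⱼ`
if `|i-j| ≥ 2`. -/
noncomputable def burauMat (n : ℕ) (i : Fin (n - 1)) :
    Matrix (Fin (n - 1)) (Fin (n - 1)) (RatFunc ℂ) :=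
  Matrix.of fun k j =>
    if j = i then (if k = i then -(RatFunc.X ^ 2) else 0)
    else (if k = j then 1 else 0) +
      (if k = i ∧ ((i : ℕ) + 1 = (j : ℕ) ∨ (j : ℕ) + 1 = (i : ℕ)) then RatFunc.X else 0)

/-- The sesquilinear `q`-form on `ℂ(q)^{n-1}`, twisted by `bar` in the first variable,
with values `⟨αᵢ, αᵢ⟩ = 1 + q²`, `⟨αᵢ, αⱼ⟩ = -q` if `|i-j| = 1`, and `0` if `|i-j| ≥ 2`. -/
noncomputable def burauForm (n : ℕ) (bar : RatFunc ℂ → RatFunc ℂ)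
    (v w : Fin (n - 1) → RatFunc ℂ) : RatFunc ℂ :=
  ∑ i, ∑ j, bar (v i) * w j *
    (if i = j then 1 + RatFunc.X ^ 2
     else if (i : ℕ) + 1 = (j : ℕ) ∨ (j : ℕ) + 1 = (i : ℕ) then -RatFunc.X else 0)

open Matrix

section Aux

set_option maxHeartbeats 4000000

/-- The Gram matrix of the Burau form. -/
noncomputable def auxJmat (n : ℕ) : Matrix (Fin (n - 1)) (Fin (n - 1)) (RatFunc ℂ) :=
  Matrix.of fun i j =>
    if i = j then 1 + RatFunc.X ^ 2
    else if (i : ℕ) + 1 = (j : ℕ) ∨ (j : ℕ) + 1 = (i : ℕ) then -RatFunc.X else 0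

lemma auxSumM (n : ℕ) (i l : Fin (n - 1)) (f : Fin (n - 1) → RatFunc ℂ) :
    ∑ b, f b * burauMat n i b l =
      if l = i then f i * -(RatFunc.X ^ 2)
      else f l + (if (i : ℕ) + 1 = (l : ℕ) ∨ (l : ℕ) + 1 = (i : ℕ) then f i * RatFunc.X else 0) := by
  by_cases hl : l = i <;>
    simp [burauMat, hl, mul_ite, mul_add, ite_and, Finset.sum_add_distrib, Finset.sum_ite_eq',
      mul_zero, mul_one, apply_ite (f := fun r => Finset.sum Finset.univ r)]

lemma auxSumMbar (n : ℕ) (bar : RatFunc ℂ ≃ₐ[ℂ] RatFunc ℂ)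
    (hbar : bar RatFunc.X = (RatFunc.X)⁻¹) (i k : Fin (n - 1)) (f : Fin (n - 1) → RatFunc ℂ) :
    ∑ a, bar (burauMat n i a k) * f a =
      if k = i then -(RatFunc.X⁻¹ ^ 2) * f i
      else f k + (if (i : ℕ) + 1 = (k : ℕ) ∨ (k : ℕ) + 1 = (i : ℕ) then RatFunc.X⁻¹ * f i else 0) := by
  by_cases hk : k = i <;>
    simp [burauMat, hk, hbar, apply_ite bar, ite_mul, add_mul, ite_and, Finset.sum_add_distrib,
      Finset.sum_ite_eq', zero_mul, one_mul]

lemma auxKey (n : ℕ) (bar : RatFunc ℂ ≃ₐ[ℂ] RatFunc ℂ) (hbar : bar RatFunc.X = (RatFunc.X)⁻¹)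
    (i : Fin (n - 1)) :
    ((burauMat n i).map bar)ᵀ * auxJmat n * burauMat n i = auxJmat n := by
  have hX : (RatFunc.X : RatFunc ℂ) ≠ 0 := RatFunc.X_ne_zero
  ext k l
  rw [Matrix.mul_apply]
  simp only [Matrix.mul_apply, Matrix.transpose_apply, Matrix.map_apply]
  rw [auxSumM]
  rw [auxSumMbar n bar hbar, auxSumMbar n bar hbar]
  simp only [auxJmat, Matrix.of_apply]
  split_ifs <;> (try simp only [Fin.ext_iff] at *) <;>
    first
    | omega
    | ring
    | skip
  all_goals (field_simp <;> ring)

lemma auxMapMul (bar : RatFunc ℂ ≃ₐ[ℂ] RatFunc ℂ) {m : ℕ}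
    (A B : Matrix (Fin m) (Fin m) (RatFunc ℂ)) :
    (A * B).map bar = A.map bar * B.map bar := by
  ext k l
  simp [Matrix.mul_apply, Matrix.map_apply, map_sum]

lemma auxMapOne (bar : RatFunc ℂ ≃ₐ[ℂ] RatFunc ℂ) {m : ℕ} :
    (1 : Matrix (Fin m) (Fin m) (RatFunc ℂ)).map bar = 1 := by
  ext k l
  by_cases h : k = l <;> simp [Matrix.one_apply, Matrix.map_apply, h]

/-- The form written via the Gram matrix. -/
lemma auxFormEq (n : ℕ) (bar : RatFunc ℂ ≃ₐ[ℂ] RatFunc ℂ) (v w : Fin (n - 1) → RatFunc ℂ) :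
    burauForm n bar v w = (fun i => bar (v i)) ⬝ᵥ (auxJmat n *ᵥ w) := by
  unfold burauForm dotProduct Matrix.mulVec
  refine Finset.sum_congr rfl fun i _ => ?_
  unfold dotProduct
  rw [Finset.mul_sum]
  refine Finset.sum_congr rfl fun j _ => ?_
  simp only [auxJmat, Matrix.of_apply]
  ring

/-- Invariance of the form under any matrix satisfying the unitarity identity. -/
lemma auxInv (n : ℕ) (bar : RatFunc ℂ ≃ₐ[ℂ] RatFunc ℂ)
    (M : Matrix (Fin (n - 1)) (Fin (n - 1)) (RatFunc ℂ))
    (hM : (M.map bar)ᵀ * auxJmat n * M = auxJmat n) (v w : Fin (n - 1) → RatFunc ℂ) :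
    burauForm n bar (M *ᵥ v) (M *ᵥ w) = burauForm n bar v w := by
  rw [auxFormEq, auxFormEq]
  have hv : (fun i => bar ((M *ᵥ v) i)) = (M.map bar) *ᵥ (fun i => bar (v i)) := by
    funext i
    simp [Matrix.mulVec, dotProduct, map_sum, Matrix.map_apply]
  rw [hv, Matrix.mulVec_mulVec, ← Matrix.vecMul_transpose, Matrix.dotProduct_mulVec,
    Matrix.vecMul_vecMul, ← mul_assoc, hM, ← Matrix.dotProduct_mulVec]

lemma auxStepMul (n : ℕ) (bar : RatFunc ℂ ≃ₐ[ℂ] RatFunc ℂ)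
    (A B : Matrix (Fin (n - 1)) (Fin (n - 1)) (RatFunc ℂ))
    (hA : (A.map bar)ᵀ * auxJmat n * A = auxJmat n)
    (hB : (B.map bar)ᵀ * auxJmat n * B = auxJmat n) :
    ((A * B).map bar)ᵀ * auxJmat n * (A * B) = auxJmat n := by
  rw [auxMapMul, Matrix.transpose_mul]
  calc (B.map bar)ᵀ * (A.map bar)ᵀ * auxJmat n * (A * B)
      = (B.map bar)ᵀ * ((A.map bar)ᵀ * auxJmat n * A) * B := by noncomm_ring
    _ = auxJmat n := by rw [hA, hB]

lemma auxStepInv (n : ℕ) (bar : RatFunc ℂ ≃ₐ[ℂ] RatFunc ℂ)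
    (A B : Matrix (Fin (n - 1)) (Fin (n - 1)) (RatFunc ℂ))
    (hAB : A * B = 1)
    (hA : (A.map bar)ᵀ * auxJmat n * A = auxJmat n) :
    (B.map bar)ᵀ * auxJmat n * B = auxJmat n := by
  conv_lhs => rw [← hA]
  calc (B.map bar)ᵀ * ((A.map bar)ᵀ * auxJmat n * A) * B
      = ((A * B).map bar)ᵀ * auxJmat n * (A * B) := by
        rw [auxMapMul, Matrix.transpose_mul]; noncomm_ring
    _ = auxJmat n := by rw [hAB, auxMapOne bar]; simp

end Aux

set_option maxHeartbeats 2000000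

/-- The Burau representation of the braid group `B_n` is `q`-unitary: for every braid `β`
and vectors `v, w`, one has `⟨ρ(β)v, ρ(β)w⟩ = ⟨v, w⟩`, where `bar` is the ℂ-algebra
automorphism of `ℂ(q)` with `bar q = q⁻¹`. -/
theorem statement1 (n : ℕ) (hn : 2 ≤ n)
    (bar : RatFunc ℂ ≃ₐ[ℂ] RatFunc ℂ) (hbar : bar RatFunc.X = (RatFunc.X)⁻¹)
    (ρ : BraidGroup n →* GL (Fin (n - 1)) (RatFunc ℂ))
    (hρ : ∀ i : Fin (n - 1),
      (ρ (braidσ n i) : Matrix (Fin (n - 1)) (Fin (n - 1)) (RatFunc ℂ)) = burauMat n i)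
    (β : BraidGroup n) (v w : Fin (n - 1) → RatFunc ℂ) :
    burauForm n bar ((ρ β : Matrix (Fin (n - 1)) (Fin (n - 1)) (RatFunc ℂ)).mulVec v)
        ((ρ β : Matrix (Fin (n - 1)) (Fin (n - 1)) (RatFunc ℂ)).mulVec w) =
      burauForm n bar v w := by
  have claim : ∀ γ : BraidGroup n,
      (((ρ γ : Matrix (Fin (n - 1)) (Fin (n - 1)) (RatFunc ℂ)).map bar)ᵀ) * auxJmat n *
        (ρ γ : Matrix (Fin (n - 1)) (Fin (n - 1)) (RatFunc ℂ)) = auxJmat n := by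
    intro γ
    have hγ : γ ∈ Subgroup.closure (Set.range (PresentedGroup.of :
        Fin (n - 1) → BraidGroup n)) := by
      rw [PresentedGroup.closure_range_of]; trivial
    induction hγ using Subgroup.closure_induction with
    | mem x hx =>
      obtain ⟨i, rfl⟩ := hx
      have h : (PresentedGroup.of i : BraidGroup n) = braidσ n i := rfl
      rw [h, hρ i]
      exact auxKey n bar hbar i
    | one =>
      have h : (ρ (1 : BraidGroup n) : Matrix (Fin (n - 1)) (Fin (n - 1)) (RatFunc ℂ)) = 1 := by
        rw [_root_.map_one]; rfl
      rw [h, auxMapOne bar]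
      simp
    | mul x y hx hy ihx ihy =>
      have h : (ρ (x * y) : Matrix (Fin (n - 1)) (Fin (n - 1)) (RatFunc ℂ)) =
          (ρ x : Matrix (Fin (n - 1)) (Fin (n - 1)) (RatFunc ℂ)) *
          (ρ y : Matrix (Fin (n - 1)) (Fin (n - 1)) (RatFunc ℂ)) := by
        rw [_root_.map_mul]; rfl
      rw [h]
      exact auxStepMul n bar _ _ ihx ihy
    | inv x hx ihx =>
      refine auxStepInv n bar (ρ x : Matrix (Fin (n - 1)) (Fin (n - 1)) (RatFunc ℂ))
        (ρ x⁻¹ : Matrix (Fin (n - 1)) (Fin (n - 1)) (RatFunc ℂ)) ?_ ihx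
      rw [← Units.val_mul, ← _root_.map_mul, mul_inv_cancel, _root_.map_one, Units.val_one]
  exact auxInv n bar (ρ β : Matrix (Fin (n - 1)) (Fin (n - 1)) (RatFunc ℂ)) (claim β) v w
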